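/- Let γ > 0, let ρ : [0,∞) → [0,∞) be nondecreasing and of upper type γ, and set ω̂(r) = ∫_r^1 ρ(1-s) ds. Then r ↦ ω̂(r)/(1-r)^{γ+1} is essentially increasing on [0,1) and r ↦ ω̂(r)/(1-r) is essentially decreasing on [0,1); i.e., there are constants such that ω̂(r)/(1-r)^{γ+1} ≤ C ω̂(t)/(1-t)^{γ+1} and ω̂(t)/(1-t) ≤ C ω̂(r)/(1-r) for all 0 ≤ r ≤ t < 1. -/

import Mathlib

open MeasureTheory

theorem tail_integral_essential_monotonicity (γ Cρ : ℝ) (hγ : 0 < γ) (hCρ : 0 < Cρ)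
    (ρ : ℝ → ℝ) (hρ0 : ∀ x, 0 ≤ ρ x) (hmono : Monotone ρ)
    (hupper : ∀ x y : ℝ, 1 ≤ x → 0 < y → ρ (x * y) ≤ Cρ * x ^ γ * ρ y) :
    ∃ C : ℝ, 0 < C ∧ ∀ r t : ℝ, 0 ≤ r → r ≤ t → t < 1 →
      ((∫ s in r..1, ρ (1 - s)) / (1 - r) ^ (γ + 1) ≤
        C * ((∫ s in t..1, ρ (1 - s)) / (1 - t) ^ (γ + 1))) ∧
      ((∫ s in t..1, ρ (1 - s)) / (1 - t) ≤
        C * ((∫ s in r..1, ρ (1 - s)) / (1 - r))) := by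
  set C : ℝ := max Cρ 1 with hCdef
  have hC1 : (1 : ℝ) ≤ C := le_max_right _ _
  have hCρC : Cρ ≤ C := le_max_left _ _
  have hCpos : (0 : ℝ) < C := lt_of_lt_of_le one_pos hC1
  refine ⟨C, hCpos, fun r t hr hrt ht1 => ?_⟩
  set a : ℝ := 1 - r with hadef
  set b : ℝ := 1 - t with hbdef
  have hb : (0 : ℝ) < b := by simp [hbdef]; linarith
  have hba : b ≤ a := by simp [hadef, hbdef]; linarith
  have ha : (0 : ℝ) < a := lt_of_lt_of_le hb hba
  have hanti : Antitone (fun s : ℝ => ρ (1 - s)) := fun x y hxy => hmono (by linarith)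
  have hint : ∀ u v : ℝ, IntervalIntegrable (fun s : ℝ => ρ (1 - s)) volume u v :=
    fun u v => hanti.intervalIntegrable
  -- rewrite the integrals via substitution u = 1 - s
  have e1 : (∫ s in r..1, ρ (1 - s)) = ∫ u in (0:ℝ)..a, ρ u := by
    rw [intervalIntegral.integral_comp_sub_left (fun u => ρ u) 1]
    norm_num
    rfl
  have e2 : (∫ s in t..1, ρ (1 - s)) = ∫ u in (0:ℝ)..b, ρ u := by
    rw [intervalIntegral.integral_comp_sub_left (fun u => ρ u) 1]
    norm_num
    rfl
  have hIt_nonneg : (0 : ℝ) ≤ ∫ s in t..1, ρ (1 - s) :=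
    intervalIntegral.integral_nonneg (by linarith) (fun x _ => hρ0 _)
  have hIr_nonneg : (0 : ℝ) ≤ ∫ s in r..1, ρ (1 - s) :=
    intervalIntegral.integral_nonneg (by linarith) (fun x _ => hρ0 _)
  constructor
  · -- first inequality
    set lam : ℝ := a / b with hlamdef
    have hlam1 : (1 : ℝ) ≤ lam := (one_le_div hb).mpr hba
    have hlampos : (0 : ℝ) < lam := lt_of_lt_of_le one_pos hlam1
    have hlamb : b * lam = a := by rw [hlamdef]; field_simp [hb.ne']
    have hlamγ : (1 : ℝ) ≤ lam ^ γ := Real.one_le_rpow hlam1 hγ.le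
    have hlamγpos : (0 : ℝ) < lam ^ γ := lt_of_lt_of_le one_pos hlamγ
    -- pointwise bound
    have hpt : ∀ v ∈ Set.Icc (0:ℝ) b, ρ (v * lam) ≤ C * lam ^ γ * ρ v := by
      intro v hv
      rcases eq_or_lt_of_le hv.1 with hv0 | hv0
      · have : ρ (v * lam) = ρ v * 1 := by rw [← hv0]; simp
        rw [this]
        have := hρ0 v
        have h1 : (1:ℝ) ≤ C * lam ^ γ := by nlinarith
        nlinarith
      · calc ρ (v * lam) = ρ (lam * v) := by rw [mul_comm]
          _ ≤ Cρ * lam ^ γ * ρ v := hupper lam v hlam1 hv0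
          _ ≤ C * lam ^ γ * ρ v := by
              have h2 := hρ0 v
              have h3 : Cρ * lam ^ γ ≤ C * lam ^ γ :=
                mul_le_mul_of_nonneg_right hCρC hlamγpos.le
              exact mul_le_mul_of_nonneg_right h3 h2
    have hmono1 : Monotone (fun v : ℝ => ρ (v * lam)) :=
      fun x y hxy => hmono (by nlinarith)
    have hmono2 : Monotone (fun v : ℝ => C * lam ^ γ * ρ v) :=
      fun x y hxy => by
        have h := hmono hxy
        dsimp only
        exact mul_le_mul_of_nonneg_left h (by positivity)
    have hintineq : (∫ v in (0:ℝ)..b, ρ (v * lam)) ≤ ∫ v in (0:ℝ)..b, C * lam ^ γ * ρ v :=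
      intervalIntegral.integral_mono_on hb.le hmono1.intervalIntegrable
        hmono2.intervalIntegrable hpt
    have hchg : (∫ v in (0:ℝ)..b, ρ (v * lam)) = lam⁻¹ * ∫ u in (0:ℝ)..a, ρ u := by
      rw [intervalIntegral.integral_comp_mul_right (fun u => ρ u) (ne_of_gt hlampos)]
      rw [zero_mul, hlamb]
      simp
    have hconst : (∫ v in (0:ℝ)..b, C * lam ^ γ * ρ v)
        = C * lam ^ γ * ∫ v in (0:ℝ)..b, ρ v := by
      rw [intervalIntegral.integral_const_mul]
    have key : (∫ u in (0:ℝ)..a, ρ u) ≤ C * (lam ^ (γ+1)) * ∫ v in (0:ℝ)..b, ρ v := by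
      have hrw : lam ^ (γ + 1) = lam ^ γ * lam := by
        rw [Real.rpow_add hlampos, Real.rpow_one]
      rw [hrw]
      rw [hchg, hconst] at hintineq
      calc (∫ u in (0:ℝ)..a, ρ u) = lam * (lam⁻¹ * ∫ u in (0:ℝ)..a, ρ u) := by
            field_simp
        _ ≤ lam * (C * lam ^ γ * ∫ v in (0:ℝ)..b, ρ v) :=
            mul_le_mul_of_nonneg_left hintineq hlampos.le
        _ = C * (lam ^ γ * lam) * ∫ v in (0:ℝ)..b, ρ v := by ring
    have hpa : (0:ℝ) < a ^ (γ + 1) := Real.rpow_pos_of_pos ha _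
    have hpb : (0:ℝ) < b ^ (γ + 1) := Real.rpow_pos_of_pos hb _
    have hasplit : a ^ (γ + 1) = lam ^ (γ + 1) * b ^ (γ + 1) := by
      rw [← Real.mul_rpow hlampos.le hb.le, mul_comm lam b, hlamb]
    rw [e1, e2, ← mul_div_assoc, div_le_div_iff₀ hpa hpb]
    have hIb : (0:ℝ) ≤ ∫ v in (0:ℝ)..b, ρ v :=
      intervalIntegral.integral_nonneg hb.le (fun x _ => hρ0 _)
    calc (∫ u in (0:ℝ)..a, ρ u) * b ^ (γ + 1)
        ≤ (C * lam ^ (γ+1) * ∫ v in (0:ℝ)..b, ρ v) * b ^ (γ + 1) :=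
          mul_le_mul_of_nonneg_right key hpb.le
      _ = C * (∫ v in (0:ℝ)..b, ρ v) * a ^ (γ + 1) := by rw [hasplit]; ring
  · -- second inequality
    have hsplit : (∫ s in r..t, ρ (1 - s)) + (∫ s in t..1, ρ (1 - s))
        = ∫ s in r..1, ρ (1 - s) :=
      intervalIntegral.integral_add_adjacent_intervals (hint r t) (hint t 1)
    have hup : (∫ s in t..1, ρ (1 - s)) ≤ b * ρ b := by
      have : (∫ s in t..1, ρ (1 - s)) ≤ ∫ s in t..1, ρ b :=
        intervalIntegral.integral_mono_on (by linarith) (hint t 1)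
          intervalIntegrable_const
          (fun s hs => hmono (by simp [hbdef]; linarith [hs.1]))
      simpa [hbdef, smul_eq_mul] using this
    have hlow : (t - r) * ρ b ≤ ∫ s in r..t, ρ (1 - s) := by
      have : (∫ s in r..t, ρ b) ≤ ∫ s in r..t, ρ (1 - s) :=
        intervalIntegral.integral_mono_on hrt intervalIntegrable_const (hint r t)
          (fun s hs => hmono (by simp [hbdef]; linarith [hs.2]))
      simpa [smul_eq_mul] using this
    have hmain : (∫ s in t..1, ρ (1 - s)) / b ≤ (∫ s in r..1, ρ (1 - s)) / a := by
      rw [div_le_div_iff₀ hb ha]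
      have hρb := hρ0 b
      nlinarith [hsplit, hup, hlow, hIt_nonneg]
    calc (∫ s in t..1, ρ (1 - s)) / b ≤ (∫ s in r..1, ρ (1 - s)) / a := hmain
      _ ≤ C * ((∫ s in r..1, ρ (1 - s)) / a) := by
          nlinarith [div_nonneg hIr_nonneg ha.le]
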